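/- Let k be a commutative field, n ≥ 1, and let F ∈ k[x₁, …, xₙ] be a homogeneous polynomial. If the only zero of F in kⁿ is the trivial zero (0, …, 0), then the only zero of F in k(t)ⁿ, where k(t) is the field of rational functions in one variable over k, is the trivial zero. -/

import Mathlib

open MvPolynomial Polynomial

lemma aeval_mul_smul {R S : Type*} [CommSemiring R] [CommSemiring S] [Algebra R S]
    {σ : Type*} [Fintype σ] {d : ℕ}
    {F : MvPolynomial σ R} (hF : F.IsHomogeneous d) (c : S) (w : σ → S) :
    MvPolynomial.aeval (fun i => c * w i) F = c ^ d * MvPolynomial.aeval w F := by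
  rw [MvPolynomial.aeval_def, MvPolynomial.eval₂_eq, MvPolynomial.aeval_def,
    MvPolynomial.eval₂_eq, Finset.mul_sum]
  apply Finset.sum_congr rfl
  intro m hm
  have hdeg : ∑ i ∈ m.support, m i = d := by
    have := hF (MvPolynomial.mem_support_iff.mp hm)
    simpa only [Finsupp.weight_apply, Pi.one_apply, smul_eq_mul, mul_one, Finsupp.sum] using this
  simp_rw [mul_pow]
  rw [Finset.prod_mul_distrib, Finset.prod_pow_eq_pow_sum, hdeg]
  ring

lemma poly_zero (k : Type*) [Field k] (n : ℕ) (d : ℕ)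
    (F : MvPolynomial (Fin n) k) (hF : F.IsHomogeneous d)
    (h : ∀ z : Fin n → k, MvPolynomial.eval z F = 0 → z = 0) :
    ∀ q : Fin n → Polynomial k, MvPolynomial.aeval q F = 0 → q = 0 := by
  suffices H : ∀ (N : ℕ) (q : Fin n → Polynomial k), (∑ i, (q i).natDegree) = N →
      MvPolynomial.aeval q F = 0 → q = 0 by
    intro q hq; exact H _ q rfl hq
  intro N
  induction N using Nat.strong_induction_on with
  | _ N ih =>
  intro q hN hq
  -- evaluate at 0
  have h0 : MvPolynomial.eval (fun i => (q i).eval 0) F = 0 := by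
    have h1 := MvPolynomial.eval₂_comp_left (Polynomial.evalRingHom (0:k))
      (algebraMap k (Polynomial k)) q F
    have h2 : (Polynomial.evalRingHom (0:k)).comp (algebraMap k (Polynomial k))
        = RingHom.id k := by ext a; simp
    rw [h2] at h1
    rw [← MvPolynomial.aeval_def, hq] at h1
    simp only [Polynomial.coe_evalRingHom] at h1
    rw [MvPolynomial.eval₂_id] at h1
    simpa [Function.comp_def] using h1.symm
  have hz := h _ h0
  have hdvd : ∀ i, (q i).eval 0 = 0 := fun i => congrFun hz i
  set r : Fin n → Polynomial k := fun i => (q i).divX with hr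
  have hqr : ∀ i, q i = Polynomial.X * r i := by
    intro i
    conv_lhs => rw [← (q i).X_mul_divX_add]
    rw [Polynomial.coeff_zero_eq_eval_zero, hdvd i]
    simp [hr]
  by_cases hq0 : q = 0
  · exact hq0
  · exfalso
    obtain ⟨i0, hi0⟩ : ∃ i, q i ≠ 0 := by
      by_contra hc; push_neg at hc; exact hq0 (funext hc)
    have hrF : MvPolynomial.aeval r F = 0 := by
      have : MvPolynomial.aeval (fun i => Polynomial.X * r i) F
          = Polynomial.X ^ d * MvPolynomial.aeval r F := aeval_mul_smul hF _ _
      rw [← funext hqr] at this  -- q = fun i => X * r i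
      rw [hq] at this
      exact (mul_eq_zero.mp this.symm).resolve_left (pow_ne_zero _ Polynomial.X_ne_zero)
    have hri0 : r i0 ≠ 0 := fun hc => hi0 (by rw [hqr i0, hc, mul_zero])
    have hlt : ∑ i, (r i).natDegree < N := by
      rw [← hN]
      refine Finset.sum_lt_sum ?_ ⟨i0, Finset.mem_univ i0, ?_⟩
      · intro i _
        by_cases hri : r i = 0
        · rw [hqr i, hri, mul_zero]
        · rw [hqr i, Polynomial.natDegree_mul Polynomial.X_ne_zero hri,
            Polynomial.natDegree_X]
          omega
      · rw [hqr i0, Polynomial.natDegree_mul Polynomial.X_ne_zero hri0,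
          Polynomial.natDegree_X]
        omega
    have := ih _ hlt r rfl hrF
    exact hi0 (by rw [hqr i0, congrFun this i0]; simp)

/-- If a homogeneous polynomial `F` in `n ≥ 1` variables over a field `k` has only the
trivial zero on `k`, then it has only the trivial zero on the field `k(t)` of rational
functions in one variable over `k`. -/
theorem only_trivial_zero_ratFunc
    (k : Type*) [Field k] (n : ℕ) (hn : 1 ≤ n) (d : ℕ)
    (F : MvPolynomial (Fin n) k) (hF : F.IsHomogeneous d)
    (h : ∀ z : Fin n → k, MvPolynomial.eval z F = 0 → z = 0) :
    ∀ z : Fin n → RatFunc k, MvPolynomial.aeval z F = 0 → z = 0 := by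
  intro z hz
  set φ : Polynomial k →ₐ[k] RatFunc k := IsScalarTower.toAlgHom k (Polynomial k) (RatFunc k)
    with hφ
  set D : Polynomial k := ∏ j, (z j).denom with hD
  have hDne : D ≠ 0 := Finset.prod_ne_zero_iff.mpr fun j _ => RatFunc.denom_ne_zero (z j)
  set q : Fin n → Polynomial k := fun i => (z i).num * ∏ j ∈ Finset.univ.erase i, (z j).denom
    with hqdef
  have hφq : ∀ i, φ (q i) = φ D * z i := by
    intro i
    have hdne : (algebraMap (Polynomial k) (RatFunc k)) (z i).denom ≠ 0 :=
      fun hc => RatFunc.denom_ne_zero (z i)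
        ((map_eq_zero_iff _ (IsFractionRing.injective _ _)).mp hc)
    have hnum : (algebraMap (Polynomial k) (RatFunc k) (z i).num)
        = z i * algebraMap (Polynomial k) (RatFunc k) (z i).denom := by
      have h1 := RatFunc.num_div_denom (z i)
      rw [div_eq_iff hdne] at h1
      exact h1
    have : D = (z i).denom * ∏ j ∈ Finset.univ.erase i, (z j).denom := by
      rw [hD, ← Finset.prod_erase_mul _ _ (Finset.mem_univ i)]; ring
    simp only [hqdef, hφ, IsScalarTower.coe_toAlgHom', map_mul, this, hnum]
    ring
  have hq0 : MvPolynomial.aeval q F = 0 := by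
    apply IsFractionRing.injective (Polynomial k) (RatFunc k)
    rw [map_zero]
    have hc := MvPolynomial.comp_aeval_apply (R := k) (f := q) φ F
    have : (fun i => φ (q i)) = fun i => φ D * z i := funext hφq
    rw [this, aeval_mul_smul hF, hz, mul_zero] at hc
    exact hc
  have hq : q = 0 := poly_zero k n d F hF h q hq0
  funext i
  have := hφq i
  rw [congrFun hq i] at this
  rw [Pi.zero_apply, map_zero] at this
  rcases mul_eq_zero.mp this.symm with hc | hc
  · exact absurd ((map_eq_zero_iff φ
      (IsFractionRing.injective (Polynomial k) (RatFunc k))).mp hc) hDne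
  · simpa using hc
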